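/- Let 𝔸 be a pca in which 0̄ and 1̄ are separable: there is a total c ∈ 𝔸 taking only values 0̄ and 1̄ with c·a = 0̄ ⟹ a ≠ 1̄ and c·a = 1̄ ⟹ a ≠ 0̄. Then there exists b ∈ 𝔸 with no total extension in 𝔸, i.e., no total f ∈ 𝔸 satisfies f·a = b·a whenever b·a↓. -/
import Mathlib


/-- Partial application lifted to `Option` (strict: defined iff both sides defined). -/
def pap {A : Type*} (f : A → A → Option A) (x y : Option A) : Option A :=
  x.bind fun a => y.bind fun b => f a b

/-- A partial combinatory algebra, via Feferman's characterization with combinators `k`, `s`. -/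
structure PCA (A : Type*) where
  app : A → A → Option A
  k : A
  s : A
  k_spec : ∀ a b : A, pap app (pap app (some k) (some a)) (some b) = some a
  s_defined : ∀ a b : A, (pap app (pap app (some s) (some a)) (some b)).isSome
  s_spec : ∀ a b c : A,
    pap app (pap app (pap app (some s) (some a)) (some b)) (some c)
      = pap app (pap app (some a) (some c)) (pap app (some b) (some c))

namespace PCA
variable {A : Type*}

/-- Application on (possibly undefined) terms. -/
def ap (P : PCA A) (x y : Option A) : Option A := pap P.app x y

def K' (P : PCA A) : Option A := some P.k
def S' (P : PCA A) : Option A := some P.s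
/-- The identity combinator `i = s·k·k`. -/
def i (P : PCA A) : Option A := P.ap (P.ap P.S' P.K') P.K'
/-- `true = k`. -/
def tru (P : PCA A) : Option A := P.K'
/-- `false = k·i`. -/
def fls (P : PCA A) : Option A := P.ap P.K' P.i
/-- Pairing `⟨a,b⟩ = λ*z. z·a·b`, implemented as `s·(s·i·(k·a))·(k·b)`. -/
def pair (P : PCA A) (x y : Option A) : Option A :=
  P.ap (P.ap P.S' (P.ap (P.ap P.S' P.i) (P.ap P.K' x))) (P.ap P.K' y)
/-- Numerals: `0̄ = i`, `(n+1)‾ = ⟨false, n̄⟩`. -/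
def numeral (P : PCA A) : ℕ → Option A
  | 0 => P.i
  | n + 1 => P.pair P.fls (P.numeral n)
/-- An element is total if it is defined on every argument. -/
def total (P : PCA A) (f : A) : Prop := ∀ a : A, (P.app f a).isSome

end PCA

/-- `0̄` and `1̄` are separable in the pca `P`. -/
def PCA.Sep01 {A : Type*} (P : PCA A) : Prop :=
  ∃ c : A, P.total c ∧
    (∀ a : A, P.app c a = P.numeral 0 ∨ P.app c a = P.numeral 1) ∧
    ∀ a : A, (P.app c a = P.numeral 0 → some a ≠ P.numeral 1) ∧
             (P.app c a = P.numeral 1 → some a ≠ P.numeral 0)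

namespace PCA

variable {A : Type*} (P : PCA A)

lemma ap_none_left (y : Option A) : P.ap none y = none := rfl

lemma ap_some_some (a b : A) : P.ap (some a) (some b) = P.app a b := rfl

lemma kx_some (x : Option A) (hx : x.isSome) : (P.ap P.K' x).isSome := by
  obtain ⟨a, rfl⟩ := Option.isSome_iff_exists.mp hx
  have h := P.k_spec a a
  by_contra hns
  rw [Option.not_isSome_iff_eq_none] at hns
  have : P.ap P.K' (some a) = pap P.app (some P.k) (some a) := rfl
  rw [this.symm, hns] at h
  simp [pap] at h

lemma k_red (x y : Option A) (hx : x.isSome) (hy : y.isSome) :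
    P.ap (P.ap P.K' x) y = x := by
  obtain ⟨a, rfl⟩ := Option.isSome_iff_exists.mp hx
  obtain ⟨b, rfl⟩ := Option.isSome_iff_exists.mp hy
  exact P.k_spec a b

lemma s_some (x y : Option A) (hx : x.isSome) (hy : y.isSome) :
    (P.ap (P.ap P.S' x) y).isSome := by
  obtain ⟨a, rfl⟩ := Option.isSome_iff_exists.mp hx
  obtain ⟨b, rfl⟩ := Option.isSome_iff_exists.mp hy
  exact P.s_defined a b

lemma s_red (x y z : Option A) (hx : x.isSome) (hy : y.isSome) (hz : z.isSome) :
    P.ap (P.ap (P.ap P.S' x) y) z = P.ap (P.ap x z) (P.ap y z) := by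
  obtain ⟨a, rfl⟩ := Option.isSome_iff_exists.mp hx
  obtain ⟨b, rfl⟩ := Option.isSome_iff_exists.mp hy
  obtain ⟨c, rfl⟩ := Option.isSome_iff_exists.mp hz
  exact P.s_spec a b c

lemma K'_some : (P.K' : Option A).isSome := rfl

lemma i_some : (P.i : Option A).isSome := P.s_some _ _ P.K'_some P.K'_some

lemma i_red (x : Option A) (hx : x.isSome) : P.ap P.i x = x := by
  unfold i
  rw [P.s_red _ _ _ P.K'_some P.K'_some hx,
    P.k_red _ _ hx (P.kx_some _ hx)]

lemma fls_some : (P.fls : Option A).isSome := P.kx_some _ P.i_some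

lemma fls_red (x : Option A) (hx : x.isSome) : P.ap P.fls x = P.i :=
  P.k_red _ _ P.i_some hx

lemma pair_some (x y : Option A) (hx : x.isSome) (hy : y.isSome) :
    (P.pair x y).isSome :=
  P.s_some _ _ (P.s_some _ _ P.i_some (P.kx_some _ hx)) (P.kx_some _ hy)

lemma pair_red (x y z : Option A) (hx : x.isSome) (hy : y.isSome) (hz : z.isSome) :
    P.ap (P.pair x y) z = P.ap (P.ap z x) y := by
  unfold pair
  rw [P.s_red _ _ _ (P.s_some _ _ P.i_some (P.kx_some _ hx)) (P.kx_some _ hy) hz,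
    P.s_red _ _ _ P.i_some (P.kx_some _ hx) hz,
    P.i_red _ hz, P.k_red _ _ hx hz, P.k_red _ _ hy hz]

lemma numeral_some (n : ℕ) : (P.numeral n).isSome := by
  induction n with
  | zero => exact P.i_some
  | succ n ih => exact P.pair_some _ _ P.fls_some ih

/-- The flipping combinator `g = ⟨k·1̄, 0̄⟩`, so `g·x = x·(k·1̄)·0̄`. -/
def flip01 : Option A := P.pair (P.ap P.K' (P.numeral 1)) (P.numeral 0)

lemma flip01_some : (P.flip01 : Option A).isSome :=
  P.pair_some _ _ (P.kx_some _ (P.numeral_some 1)) (P.numeral_some 0)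

lemma flip01_zero : P.ap P.flip01 (P.numeral 0) = P.numeral 1 := by
  unfold flip01
  rw [P.pair_red _ _ _ (P.kx_some _ (P.numeral_some 1)) (P.numeral_some 0)
      (P.numeral_some 0)]
  show P.ap (P.ap P.i (P.ap P.K' (P.numeral 1))) (P.numeral 0) = P.numeral 1
  rw [P.i_red _ (P.kx_some _ (P.numeral_some 1)),
    P.k_red _ _ (P.numeral_some 1) (P.numeral_some 0)]

lemma flip01_one : P.ap P.flip01 (P.numeral 1) = P.numeral 0 := by
  unfold flip01
  rw [P.pair_red _ _ _ (P.kx_some _ (P.numeral_some 1)) (P.numeral_some 0)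
      (P.numeral_some 1)]
  have h1 : P.ap (P.numeral 1) (P.ap P.K' (P.numeral 1)) = P.numeral 0 := by
    show P.ap (P.pair P.fls (P.numeral 0)) (P.ap P.K' (P.numeral 1)) = P.numeral 0
    rw [P.pair_red _ _ _ P.fls_some (P.numeral_some 0)
        (P.kx_some _ (P.numeral_some 1)),
      P.k_red _ _ (P.numeral_some 1) P.fls_some]
    show P.ap (P.pair P.fls (P.numeral 0)) (P.numeral 0) = P.numeral 0
    rw [P.pair_red _ _ _ P.fls_some (P.numeral_some 0) (P.numeral_some 0)]
    show P.ap (P.ap P.i P.fls) (P.numeral 0) = P.numeral 0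
    rw [P.i_red _ P.fls_some, P.fls_red _ (P.numeral_some 0)]
    rfl
  rw [h1]
  exact P.i_red _ (P.numeral_some 0)

end PCA

/-- If `0̄`,`1̄` are separable in a pca, some element has no total extension. -/
theorem exists_element_without_total_extension {A : Type*} (P : PCA A)
    (hsep : P.Sep01) :
    ∃ b : A, ¬ ∃ f : A, P.total f ∧
      ∀ a : A, (P.app b a).isSome → P.app f a = P.app b a := by
  obtain ⟨c, hct, hcv, hcsep⟩ := hsep
  -- w·a = a·a
  set w : Option A := P.ap (P.ap P.S' P.i) P.i with hw
  have hw_some : w.isSome := P.s_some _ _ P.i_some P.i_some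
  -- u·a = c·(a·a)
  set u : Option A := P.ap (P.ap P.S' (P.ap P.K' (some c))) w with hu
  have hu_some : u.isSome := P.s_some _ _ (P.kx_some _ rfl) hw_some
  -- b·a = g·(c·(a·a))
  set b' : Option A := P.ap (P.ap P.S' (P.ap P.K' P.flip01)) u with hb'
  have hb'_some : b'.isSome := P.s_some _ _ (P.kx_some _ P.flip01_some) hu_some
  obtain ⟨b, hb⟩ := Option.isSome_iff_exists.mp hb'_some
  have key : ∀ a : A, P.app b a = P.ap P.flip01 (P.ap (some c) (P.app a a)) := by
    intro a
    have : P.app b a = P.ap b' (some a) := by rw [hb]; rfl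
    rw [this, hb',
      P.s_red _ _ (some a) (P.kx_some _ P.flip01_some) hu_some Option.isSome_some,
      P.k_red _ (some a) P.flip01_some Option.isSome_some, hu,
      P.s_red _ _ (some a) (P.kx_some (some c) Option.isSome_some) hw_some Option.isSome_some,
      P.k_red (some c) (some a) Option.isSome_some Option.isSome_some, hw,
      P.s_red _ _ (some a) P.i_some P.i_some Option.isSome_some,
      P.i_red (some a) Option.isSome_some]
    rfl
  refine ⟨b, ?_⟩
  rintro ⟨f, hft, hfe⟩
  obtain ⟨v, hv⟩ := Option.isSome_iff_exists.mp (hft f)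
  have hbf : P.app b f = P.ap P.flip01 (P.app c v) := by
    rw [key f, hv]; rfl
  rcases hcv v with h0 | h1
  · have hbf1 : P.app b f = P.numeral 1 := by rw [hbf, h0, P.flip01_zero]
    have hbs : (P.app b f).isSome := by
      rw [hbf1]; exact P.numeral_some 1
    have : P.app f f = P.numeral 1 := by rw [hfe f hbs, hbf1]
    exact (hcsep v).1 h0 (by rw [← hv, this])
  · have hbf0 : P.app b f = P.numeral 0 := by rw [hbf, h1, P.flip01_one]
    have hbs : (P.app b f).isSome := by
      rw [hbf0]; exact P.numeral_some 0
    have : P.app f f = P.numeral 0 := by rw [hfe f hbs, hbf0]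
    exact (hcsep v).2 h1 (by rw [← hv, this])
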